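/- Let k be a field of characteristic 2 and R = k[a,b,c,d]/(ad - bc - 1). The k-subalgebra A = k[ab, ad, cd] of R is generated as a k-algebra by the three elements ab, ad, cd, and satisfies the relation (ad)^2 - ad = (ab)(cd); moreover A ≅ k[X,Y,Z]/(Z^2 - Z - XY) via X ↦ ab, Y ↦ cd, Z ↦ ad. -/

import Mathlib

open MvPolynomial

noncomputable section

/-- The polynomial ring `k[a,b,c,d]` (variables indexed by `Fin 4`). -/
abbrev P (k : Type*) [Field k] := MvPolynomial (Fin 4) k

/-- The ideal `(ad - bc - 1)`. -/
def sl2Rel (k : Type*) [Field k] : Ideal (P k) :=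
  Ideal.span {X 0 * X 3 - X 1 * X 2 - 1}

/-- `R = k[a,b,c,d]/(ad - bc - 1)`, the coordinate ring of `SL₂`. -/
abbrev R (k : Type*) [Field k] := P k ⧸ sl2Rel k

def va (k : Type*) [Field k] : R k := Ideal.Quotient.mk _ (X 0)
def vb (k : Type*) [Field k] : R k := Ideal.Quotient.mk _ (X 1)
def vc (k : Type*) [Field k] : R k := Ideal.Quotient.mk _ (X 2)
def vd (k : Type*) [Field k] : R k := Ideal.Quotient.mk _ (X 3)

namespace Stmt15Aux

variable (k : Type*) [Field k]

/-- `S = k[x][y]`. -/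
abbrev S := Polynomial (Polynomial k)

/-- `v = (xy - 1)y = xy² - y` in `k[x][y]` (inner variable `x`, outer `y`). -/
def vv : S k :=
  (Polynomial.C Polynomial.X * Polynomial.X - 1) * Polynomial.X

lemma natDegree_vv : (vv k).natDegree = 2 := by
  unfold vv
  compute_degree!

lemma vv_ne_zero : vv k ≠ 0 := by
  intro h
  have := natDegree_vv k
  rw [h] at this
  simp at this

/-- `a ↦ x, b ↦ 1, c ↦ xy - 1, d ↦ y`. -/
def τ : P k →ₐ[k] S k :=
  MvPolynomial.aeval
    ![Polynomial.C Polynomial.X, 1, Polynomial.C Polynomial.X * Polynomial.X - 1, Polynomial.X]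

lemma τ_vanish : ∀ a ∈ sl2Rel k, τ k a = 0 := by
  intro a ha
  rw [sl2Rel, Ideal.mem_span_singleton] at ha
  obtain ⟨t, rfl⟩ := ha
  rw [map_mul]
  have : τ k (X 0 * X 3 - X 1 * X 2 - 1) = 0 := by
    simp [τ]
  rw [this, zero_mul]

/-- The induced map `R → k[x][y]`. -/
def τ' : R k →ₐ[k] S k := Ideal.Quotient.liftₐ (sl2Rel k) (τ k) (τ_vanish k)

@[simp] lemma τ'_mk (p : P k) : τ' k (Ideal.Quotient.mk _ p) = τ k p := by
  simp [τ', Ideal.Quotient.liftₐ_apply]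
  exact Ideal.Quotient.lift_mk _ _ _

/-- `MvPolynomial (Fin 1) k ≃ k[x]`. -/
def e1 : MvPolynomial (Fin 1) k ≃ₐ[k] Polynomial k :=
  (MvPolynomial.finSuccEquiv k 0).trans
    (Polynomial.mapAlgEquiv (MvPolynomial.isEmptyAlgEquiv k (Fin 0)))

/-- `MvPolynomial (Fin 2) k ≃ k[x][y]`, with `X 0 ↦ y` (outer) and `X 1 ↦ x` (inner). -/
def e2 : MvPolynomial (Fin 2) k ≃ₐ[k] S k :=
  (MvPolynomial.finSuccEquiv k 1).trans (Polynomial.mapAlgEquiv (e1 k))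

lemma e2_X0 : e2 k (X 0) = Polynomial.X := by
  simp [e2, e1, MvPolynomial.finSuccEquiv_X_zero, Polynomial.map_X]

lemma e1_X0 : e1 k (X 0) = Polynomial.X := by
  simp [e1, MvPolynomial.finSuccEquiv_X_zero, Polynomial.map_X]

lemma e2_X1 : e2 k (X 1) = Polynomial.C Polynomial.X := by
  have h1 : (X 1 : MvPolynomial (Fin 2) k) = X (Fin.succ 0) := rfl
  rw [e2, AlgEquiv.trans_apply, h1, MvPolynomial.finSuccEquiv_X_succ]
  simp only [Polynomial.coe_mapAlgEquiv, Polynomial.map_C]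
  exact congrArg Polynomial.C (e1_X0 k)

/-- The substitution-at-`vv` map, `q ↦ q.comp vv`, as a `k`-algebra hom. -/
def ξ : S k →ₐ[k] S k := (Polynomial.aeval (vv k)).restrictScalars k

lemma ξ_apply (q : S k) : ξ k q = q.comp (vv k) := by
  simp [ξ, Polynomial.aeval_def, Polynomial.comp, Polynomial.algebraMap_eq]

/-- Key independence lemma. -/
lemma key (q0 q1 : S k)
    (h : q0.comp (vv k) + q1.comp (vv k) * (Polynomial.C Polynomial.X * Polynomial.X) = 0) :
    q0 = 0 ∧ q1 = 0 := by
  have hvd := natDegree_vv k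
  have hcomp_ne : ∀ q : S k, q ≠ 0 → q.comp (vv k) ≠ 0 := by
    intro q hq hc
    rcases Polynomial.comp_eq_zero_iff.mp hc with h' | ⟨-, h'⟩
    · exact hq h'
    · rw [h'] at hvd; simp at hvd
  set w : S k := Polynomial.C Polynomial.X * Polynomial.X with hw
  have hwne : w ≠ 0 := by
    apply mul_ne_zero
    · exact fun hc => Polynomial.X_ne_zero (Polynomial.C_eq_zero.mp hc)
    · exact Polynomial.X_ne_zero
  have hwdeg : w.natDegree = 1 := by
    rw [hw]; compute_degree!
  by_cases h1 : q1 = 0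
  · subst h1
    simp only [Polynomial.zero_comp, zero_mul, add_zero] at h
    refine ⟨?_, rfl⟩
    by_contra hq0
    exact hcomp_ne q0 hq0 h
  · exfalso
    have hA : q1.comp (vv k) * w ≠ 0 := mul_ne_zero (hcomp_ne q1 h1) hwne
    have hq0c : q0.comp (vv k) = -(q1.comp (vv k) * w) := by linear_combination h
    have hq0 : q0 ≠ 0 := by
      intro hc; rw [hc, Polynomial.zero_comp] at hq0c
      exact hA (neg_eq_zero.mp hq0c.symm)
    have hd1 : (q0.comp (vv k)).natDegree = q0.natDegree * 2 := by
      rw [Polynomial.natDegree_comp, hvd]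
    have hd2 : (q1.comp (vv k) * w).natDegree = q1.natDegree * 2 + 1 := by
      rw [Polynomial.natDegree_mul (hcomp_ne q1 h1) hwne, Polynomial.natDegree_comp, hvd, hwdeg]
    rw [hq0c, Polynomial.natDegree_neg, hd2] at hd1
    omega

/-- The variable renaming `Fin 2 → Fin 3`: `X 0 ↦ Y`-slot (index 1), `X 1 ↦ X`-slot (index 0). -/
def g2 : Fin 2 → Fin 3 := ![1, 0]

/-- Every polynomial in three variables is congruent mod `(Z² - Z - XY)` to `r₀ + r₁ Z`. -/
lemma rep (p : MvPolynomial (Fin 3) k) :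
    ∃ r0 r1 : MvPolynomial (Fin 2) k,
      p - (rename g2 r0 + rename g2 r1 * X 2) ∈
        Ideal.span {(X 2 ^ 2 - X 2 - X 0 * X 1 : MvPolynomial (Fin 3) k)} := by
  induction p using MvPolynomial.induction_on with
  | C a => exact ⟨C a, 0, by simp⟩
  | add p q hp hq =>
    obtain ⟨r0, r1, h⟩ := hp
    obtain ⟨s0, s1, h'⟩ := hq
    refine ⟨r0 + s0, r1 + s1, ?_⟩
    have hm := Ideal.add_mem _ h h'
    convert hm using 1
    simp only [map_add]
    ring
  | mul_X p i hp =>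
    obtain ⟨r0, r1, h⟩ := hp
    fin_cases i <;> simp only [Fin.reduceFinMk]
    · refine ⟨r0 * X 1, r1 * X 1, ?_⟩
      have hm := Ideal.mul_mem_right (X 0) _ h
      convert hm using 1
      have : (rename g2) (X 1 : MvPolynomial (Fin 2) k) = X 0 := by simp [g2]
      simp only [map_mul, this]
      ring
    · refine ⟨r0 * X 0, r1 * X 0, ?_⟩
      have hm := Ideal.mul_mem_right (X 1) _ h
      convert hm using 1
      have : (rename g2) (X 0 : MvPolynomial (Fin 2) k) = X 1 := by simp [g2]
      simp only [map_mul, this]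
      ring
    · refine ⟨r1 * (X 0 * X 1), r0 + r1, ?_⟩
      have hf : (X 2 ^ 2 - X 2 - X 0 * X 1 : MvPolynomial (Fin 3) k) ∈
          Ideal.span {(X 2 ^ 2 - X 2 - X 0 * X 1 : MvPolynomial (Fin 3) k)} :=
        Ideal.subset_span (Set.mem_singleton _)
      have hm := Ideal.add_mem _ (Ideal.mul_mem_right (X 2) _ h)
        (Ideal.mul_mem_left _ (rename g2 r1) hf)
      convert hm using 1
      have h0 : (rename g2) (X 0 : MvPolynomial (Fin 2) k) = X 1 := by simp [g2]
      have h1 : (rename g2) (X 1 : MvPolynomial (Fin 2) k) = X 0 := by simp [g2]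
      simp only [map_mul, map_add, h0, h1]
      ring

end Stmt15Aux

open Stmt15Aux

set_option maxHeartbeats 1000000 in
set_option synthInstance.maxHeartbeats 400000 in
/-- `A = k[ab, ad, cd]` satisfies `(ad)² - ad = (ab)(cd)`, and
`A ≅ k[X,Y,Z]/(Z² - Z - XY)`: the kernel of `k[X,Y,Z] → R`, `X ↦ ab`, `Y ↦ cd`,
`Z ↦ ad`, is exactly the ideal `(Z² - Z - XY)`, and its range is `A`. -/
theorem stmt15 (k : Type*) [Field k] [CharP k 2] :
    letI φ : MvPolynomial (Fin 3) k →ₐ[k] R k :=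
      MvPolynomial.aeval ![va k * vb k, vc k * vd k, va k * vd k]
    (va k * vd k) ^ 2 - va k * vd k = (va k * vb k) * (vc k * vd k) ∧
    φ.range = Algebra.adjoin k {va k * vb k, va k * vd k, vc k * vd k} ∧
    RingHom.ker φ.toRingHom = Ideal.span {X 2 ^ 2 - X 2 - X 0 * X 1} := by
  set φ : MvPolynomial (Fin 3) k →ₐ[k] R k :=
    MvPolynomial.aeval ![va k * vb k, vc k * vd k, va k * vd k] with hφ
  -- Part 1
  have h1 : (va k * vd k) ^ 2 - va k * vd k = (va k * vb k) * (vc k * vd k) := by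
    have hm : ((X 0 * X 3) ^ 2 - X 0 * X 3 - (X 0 * X 1) * (X 2 * X 3) : P k) ∈ sl2Rel k := by
      rw [sl2Rel, Ideal.mem_span_singleton]
      exact ⟨X 0 * X 3, by ring⟩
    have h0 : (Ideal.Quotient.mk (sl2Rel k))
        ((X 0 * X 3) ^ 2 - X 0 * X 3 - (X 0 * X 1) * (X 2 * X 3)) = 0 :=
      Ideal.Quotient.eq_zero_iff_mem.mpr hm
    simp only [map_sub, map_mul, map_pow] at h0
    unfold va vb vc vd
    linear_combination h0
  refine ⟨h1, ?_, ?_⟩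
  -- Part 2 : range
  · rw [hφ, ← Algebra.adjoin_range_eq_range_aeval]
    congr 1
    ext u
    simp only [Matrix.range_cons, Matrix.range_empty, Set.singleton_union, Set.union_empty,
      Set.mem_insert_iff, Set.mem_union, Set.mem_singleton_iff, Set.mem_empty_iff_false, or_false]
    tauto
  -- Part 3 : kernel
  · have hf0 : φ (X 2 ^ 2 - X 2 - X 0 * X 1) = 0 := by
      rw [hφ]
      simp only [map_sub, map_pow, map_mul, aeval_X, Matrix.cons_val_zero, Matrix.cons_val_one,
        Matrix.head_cons, Matrix.cons_val_two, Matrix.tail_cons]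
      linear_combination h1
    have hle : Ideal.span {(X 2 ^ 2 - X 2 - X 0 * X 1 : MvPolynomial (Fin 3) k)} ≤
        RingHom.ker φ.toRingHom := by
      rw [Ideal.span_le, Set.singleton_subset_iff]
      exact hf0
    refine le_antisymm ?_ hle
    intro p hp
    obtain ⟨r0, r1, hrep⟩ := rep k p
    have hpd : φ (p - (rename g2 r0 + rename g2 r1 * X 2)) = 0 := hle hrep
    have hp0 : φ p = 0 := hp
    have hs : φ (rename g2 r0 + rename g2 r1 * X 2) = 0 := by
      have := hpd
      rw [map_sub, hp0] at this
      linear_combination -this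
    -- push to S
    have hcomp : ((τ' k).comp φ).comp (MvPolynomial.rename g2) =
        (ξ k).comp (e2 k).toAlgHom := by
      apply MvPolynomial.algHom_ext
      intro i
      fin_cases i <;> simp only [Fin.reduceFinMk]
      · rw [AlgHom.comp_apply, AlgHom.comp_apply, MvPolynomial.rename_X]
        have hg : g2 0 = 1 := rfl
        rw [hg]
        rw [AlgHom.comp_apply, AlgEquiv.toAlgHom_eq_coe, AlgEquiv.coe_algHom, e2_X0, ξ_apply,
          Polynomial.X_comp]
        rw [hφ]
        simp only [aeval_X, Matrix.cons_val_one, Matrix.head_cons, Matrix.cons_val_zero]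
        unfold vc vd
        rw [← map_mul, τ'_mk]
        simp [τ, vv]
      · rw [AlgHom.comp_apply, AlgHom.comp_apply, MvPolynomial.rename_X]
        have hg : g2 1 = 0 := rfl
        rw [hg]
        rw [AlgHom.comp_apply, AlgEquiv.toAlgHom_eq_coe, AlgEquiv.coe_algHom, e2_X1, ξ_apply,
          Polynomial.C_comp]
        rw [hφ]
        simp only [aeval_X, Matrix.cons_val_zero]
        unfold va vb
        rw [← map_mul, τ'_mk]
        simp [τ]
    have hgen : ∀ r : MvPolynomial (Fin 2) k,
        τ' k (φ (rename g2 r)) = (e2 k r).comp (vv k) := by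
      intro r
      have := AlgHom.congr_fun hcomp r
      simpa [ξ_apply] using this
    have hX2 : τ' k (φ (X 2)) = Polynomial.C Polynomial.X * Polynomial.X := by
      rw [hφ]
      simp only [aeval_X, Matrix.cons_val_two, Matrix.tail_cons, Matrix.head_cons]
      unfold va vd
      rw [← map_mul, τ'_mk]
      simp [τ]
    have hSeq : (e2 k r0).comp (vv k) + (e2 k r1).comp (vv k) *
        (Polynomial.C Polynomial.X * Polynomial.X) = 0 := by
      have happ := congrArg (τ' k) hs
      rw [map_zero] at happ
      rw [map_add, map_mul, map_add, map_mul] at happ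
      rw [hgen r0, hgen r1, hX2] at happ
      exact happ
    obtain ⟨hr0, hr1⟩ := key k _ _ hSeq
    have hr0' : r0 = 0 := (e2 k).injective (hr0.trans (map_zero (e2 k)).symm)
    have hr1' : r1 = 0 := (e2 k).injective (hr1.trans (map_zero (e2 k)).symm)
    rw [hr0', hr1'] at hrep
    simpa using hrep

end
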